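/- Let V be a real vector space of dimension n equipped with a complete flag {0} = V₀ ⊂ V₁ ⊂ ⋯ ⊂ V_n = V of subspaces (dim V_k = k), and let γ be a nondegenerate symmetric bilinear form on V. Then there exists an ordered basis (v₁,…,v_n) of V and a partition S of the index set {1,…,n} into subsets of cardinality 1 or 2 such that: (i) V_k = span{v₁,…,v_k} for all 1 ≤ k ≤ n; (ii) γ(v_i,v_j) = 0 whenever i and j belong to different subsets of S; (iii) γ(v_i,v_i) = ±1 for every i with {i} ∈ S; (iv) γ(v_i,v_i) = γ(v_j,v_j) = 0 and γ(v_i,v_j) = 1 for every pair i ≠ j with {i,j} ∈ S. -/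

import Mathlib

open Module

private lemma sup_span_aux {V : Type*} [AddCommGroup V] [Module ℝ V]
    (p : Submodule ℝ V) (x w : V) (c : ℝ) (hc : c ≠ 0) (hw : w ∈ p) :
    p ⊔ Submodule.span ℝ {c • x + w} = p ⊔ Submodule.span ℝ {x} := by
  apply le_antisymm
  · apply sup_le le_sup_left
    rw [Submodule.span_le, Set.singleton_subset_iff]
    exact add_mem (Submodule.smul_mem _ _ (Submodule.mem_sup_right
      (Submodule.mem_span_singleton_self x))) (Submodule.mem_sup_left hw)
  · apply sup_le le_sup_left
    rw [Submodule.span_le, Set.singleton_subset_iff]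
    have hmem : (c • x + w) - w ∈ p ⊔ Submodule.span ℝ {c • x + w} :=
      sub_mem (Submodule.mem_sup_right (Submodule.mem_span_singleton_self _))
        (Submodule.mem_sup_left hw)
    have h2 := Submodule.smul_mem (p ⊔ Submodule.span ℝ {c • x + w}) c⁻¹ hmem
    have : c⁻¹ • (c • x + w - w) = x := by
      rw [add_sub_cancel_right, smul_smul, inv_mul_cancel₀ hc, one_smul]
    rwa [this] at h2

private lemma set_lt_castSucc {k m : ℕ} (hm : m ≤ k) :
    {i : Fin (k+1) | (i:ℕ) < m} = Fin.castSucc '' {i : Fin k | (i:ℕ) < m} := by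
  ext i
  simp only [Set.mem_setOf_eq, Set.mem_image]
  constructor
  · intro hi
    exact ⟨⟨(i:ℕ), lt_of_lt_of_le hi hm⟩, hi, by ext; simp⟩
  · rintro ⟨j, hj, rfl⟩
    simpa using hj

private lemma range_snoc' {k : ℕ} {α : Type*} (u : Fin k → α) (z : α) :
    Set.range (Fin.snoc u z : Fin (k+1) → α) = insert z (Set.range u) := by
  ext a
  simp only [Set.mem_range, Set.mem_insert_iff]
  constructor
  · rintro ⟨i, rfl⟩
    refine Fin.lastCases ?_ ?_ i
    · left; simp
    · intro j; right; exact ⟨j, by simp⟩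
  · rintro (rfl | ⟨j, rfl⟩)
    · exact ⟨Fin.last k, by simp⟩
    · exact ⟨j.castSucc, by simp⟩

private lemma range_eq_setlt {k : ℕ} {α : Type*} (v : Fin k → α) :
    Set.range v = v '' {i : Fin k | (i:ℕ) < k} := by
  ext y; constructor
  · rintro ⟨i, rfl⟩; exact ⟨i, i.isLt, rfl⟩
  · rintro ⟨i, _, rfl⟩; exact ⟨i, rfl⟩

theorem stmt_8 {V : Type*} [AddCommGroup V] [Module ℝ V] [FiniteDimensional ℝ V] (n : ℕ)
    (hdimV : finrank ℝ V = n)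
    (W : ℕ → Submodule ℝ V)
    (hW0 : W 0 = ⊥) (hWn : W n = ⊤)
    (hmono : ∀ k l, k ≤ l → l ≤ n → W k ≤ W l)
    (hdim : ∀ k ≤ n, finrank ℝ (W k) = k)
    (γ : V →ₗ[ℝ] V →ₗ[ℝ] ℝ)
    (hsymm : ∀ x y, γ x y = γ y x)
    (hnd : ∀ x, (∀ y, γ x y = 0) → x = 0) :
    ∃ (v : Basis (Fin n) ℝ V) (σ : Fin n → Fin n),
      (∀ i, σ (σ i) = i) ∧
      (∀ k ≤ n, W k = Submodule.span ℝ (⇑v '' {i : Fin n | (i : ℕ) < k})) ∧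
      (∀ i j : Fin n, j ≠ i → j ≠ σ i → γ (v i) (v j) = 0) ∧
      (∀ i, σ i = i → γ (v i) (v i) = 1 ∨ γ (v i) (v i) = -1) ∧
      (∀ i, σ i ≠ i → γ (v i) (v i) = 0 ∧ γ (v i) (v (σ i)) = 1) := by
  -- main induction: partial adapted data up to level k
  have key : ∀ k, k ≤ n → ∃ (v : Fin k → V) (σ : Fin k → Fin k) (O : Finset (Fin k)),
      (∀ i, σ (σ i) = i) ∧
      (∀ j ≤ k, W j = Submodule.span ℝ (v '' {i : Fin k | (i:ℕ) < j})) ∧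
      (∀ i ∈ O, σ i = i) ∧
      (∀ i ∈ O, ∀ j, γ (v i) (v j) = 0) ∧
      (∀ i j : Fin k, j ≠ i → j ≠ σ i → γ (v i) (v j) = 0) ∧
      (∀ i, i ∉ O → σ i = i → γ (v i) (v i) = 1 ∨ γ (v i) (v i) = -1) ∧
      (∀ i, σ i ≠ i → γ (v i) (v i) = 0 ∧ γ (v i) (v (σ i)) = 1) := by
    intro k
    induction k with
    | zero =>
      intro _
      refine ⟨Fin.elim0, id, ∅, fun i => rfl, ?_, by simp, by simp, fun i => i.elim0,
        fun i => i.elim0, fun i => i.elim0⟩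
      intro j hj
      interval_cases j
      rw [hW0]
      have : {i : Fin 0 | (i:ℕ) < 0} = ∅ := by ext i; exact i.elim0
      simp [this]
    | succ k ih =>
      intro hk1
      have hkn : k ≤ n := Nat.le_of_succ_le hk1
      obtain ⟨v, σ, O, h1, h2, h3, h4, h5, h6, h7⟩ := ih hkn
      have hσne : ∀ j : Fin k, σ j ≠ j → σ j ∉ O := by
        intro j hj hmem
        have h := h3 (σ j) hmem
        rw [h1 j] at h
        exact hj h.symm
      have hσO : ∀ j : Fin k, j ∈ O → σ j = j := h3
      -- members of the flag
      have hvmem : ∀ i : Fin k, v i ∈ W k := by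
        intro i
        rw [h2 k le_rfl]
        exact Submodule.subset_span ⟨i, i.isLt, rfl⟩
      -- get x' ∈ W (k+1) \ W k orthogonal to all closed vectors
      obtain ⟨x', hx'mem, hx'not, hx'orth⟩ :
          ∃ x', x' ∈ W (k+1) ∧ x' ∉ W k ∧ ∀ j : Fin k, j ∉ O → γ x' (v j) = 0 := by
        -- pick x ∈ W(k+1) \ W k
        have hlt : W k < W (k+1) := by
          refine lt_of_le_of_ne (hmono k (k+1) (Nat.le_succ k) hk1) ?_
          intro h
          have e1 := hdim k hkn
          have e2 := hdim (k+1) hk1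
          rw [h, e2] at e1
          omega
        obtain ⟨x, hxmem, hxnot⟩ := SetLike.exists_of_lt hlt
        classical
        set d : Fin k → ℝ := fun i => if i ∈ O then 0
          else if σ i = i then γ x (v i) / γ (v i) (v i) else γ x (v (σ i)) with hd
        refine ⟨x - ∑ i, d i • v i, ?_, ?_, ?_⟩
        · exact sub_mem hxmem (Submodule.sum_mem _ (fun i _ =>
            Submodule.smul_mem _ _ (hmono k (k+1) (Nat.le_succ k) hk1 (hvmem i))))
        · intro hmem
          apply hxnot
          have : x = (x - ∑ i, d i • v i) + ∑ i, d i • v i := by abel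
          rw [this]
          exact add_mem hmem (Submodule.sum_mem _ (fun i _ =>
            Submodule.smul_mem _ _ (hvmem i)))
        · intro j hj
          have expand : γ (x - ∑ i, d i • v i) (v j)
              = γ x (v j) - ∑ i, d i * γ (v i) (v j) := by
            simp [map_sub, map_sum, LinearMap.sum_apply]
          rw [expand]
          by_cases hσj : σ j = j
          · -- singleton j
            have hsum : ∑ i, d i * γ (v i) (v j) = γ x (v j) := by
              rw [Finset.sum_eq_single j]
              · have hne : γ (v j) (v j) ≠ 0 := by
                  rcases h6 j hj hσj with h | h <;> rw [h] <;> norm_num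
                rw [hd]
                simp only [if_neg hj, if_pos hσj]
                field_simp
              · intro i _ hij
                have : γ (v i) (v j) = 0 := by
                  refine h5 i j (Ne.symm hij) ?_
                  intro h
                  exact hij (by rw [← h1 i, ← h, hσj, h])
                rw [this, mul_zero]
              · intro h; exact absurd (Finset.mem_univ j) h
            rw [hsum, sub_self]
          · -- paired j
            have hsum : ∑ i, d i * γ (v i) (v j) = γ x (v j) := by
              rw [Finset.sum_eq_single (σ j)]
              · have hσjO : σ j ∉ O := hσne j hσj
                have hσσ : ¬ (σ (σ j) = σ j) := by
                  rw [h1 j]; exact fun h => hσj h.symm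
                rw [hd]
                simp only [if_neg hσjO]
                rw [if_neg hσσ, h1 j, hsymm (v (σ j)) (v j), (h7 j hσj).2, mul_one]
              · intro i _ hiσ
                by_cases hij : i = j
                · subst hij
                  rw [(h7 i hσj).1, mul_zero]
                · have : γ (v i) (v j) = 0 := by
                    refine h5 i j (Ne.symm hij) ?_
                    intro h
                    exact hiσ (by rw [h, h1])
                  rw [this, mul_zero]
              · intro h; exact absurd (Finset.mem_univ (σ j)) h
            rw [hsum, sub_self]
      -- W (k+1) = W k ⊔ span {x'}
      have hWsup : W (k+1) = W k ⊔ Submodule.span ℝ {x'} := by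
        have hle : W k ⊔ Submodule.span ℝ {x'} ≤ W (k+1) :=
          sup_le (hmono k (k+1) (Nat.le_succ k) hk1)
            ((Submodule.span_singleton_le_iff_mem _ _).2 hx'mem)
        have hlt : W k < W k ⊔ Submodule.span ℝ {x'} :=
          lt_of_le_of_ne le_sup_left (fun h => hx'not (h ▸ Submodule.mem_sup_right
            (Submodule.mem_span_singleton_self x')))
        refine (Submodule.eq_of_le_of_finrank_le hle ?_).symm
        rw [hdim (k+1) hk1]
        have := Submodule.finrank_lt_finrank_of_lt hlt
        rw [hdim k hkn] at this
        omega
      have hWk_span : W k = Submodule.span ℝ (Set.range v) := by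
        rw [range_eq_setlt, ← h2 k le_rfl]
      by_cases hO : ∀ j ∈ O, γ x' (v j) = 0
      · -- cases 1 & 2 : new singleton (open or closed)
        set a := γ x' x' with ha
        have hx'all : ∀ j : Fin k, γ x' (v j) = 0 := by
          intro j
          by_cases hj : j ∈ O
          · exact hO j hj
          · exact hx'orth j hj
        set s : ℝ := if a = 0 then 1 else (Real.sqrt |a|)⁻¹ with hs
        have hs0 : s ≠ 0 := by
          rw [hs]
          split
          · exact one_ne_zero
          · next h =>
            exact inv_ne_zero (ne_of_gt (Real.sqrt_pos.2 (abs_pos.2 h)))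
        set z : V := s • x' with hz
        have hzzcalc : γ z z = s^2 * a := by
          rw [hz]
          simp only [map_smul, LinearMap.smul_apply, smul_eq_mul, ← ha]
          ring
        have hzsq : a ≠ 0 → γ z z = 1 ∨ γ z z = -1 := by
          intro h
          rw [hzzcalc, hs, if_neg h, sq, ← mul_inv, Real.mul_self_sqrt (abs_nonneg a)]
          rcases lt_or_gt_of_ne h with h' | h'
          · right; rw [abs_of_neg h']; field_simp
          · left; rw [abs_of_pos h']; field_simp
        have hzorth : ∀ j : Fin k, γ z (v j) = 0 := by
          intro j
          rw [hz]
          simp only [map_smul, LinearMap.smul_apply, smul_eq_mul]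
          rw [hx'all j, mul_zero]
        have hzz0 : a = 0 → γ z z = 0 := by
          intro h
          rw [hzzcalc, h, mul_zero]
        refine ⟨Fin.snoc v z, Fin.snoc (fun i => (σ i).castSucc) (Fin.last k),
          (if a = 0 then {Fin.last k} else ∅) ∪ O.image Fin.castSucc, ?_, ?_, ?_, ?_, ?_, ?_, ?_⟩
        · -- involution
          intro i
          induction i using Fin.lastCases with
          | last => simp
          | cast j => simp [h1 j]
        · -- spans
          intro m hm
          rcases Nat.lt_or_ge m (k+1) with hm' | hm'
          · have hmk : m ≤ k := Nat.lt_succ_iff.1 hm'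
            rw [set_lt_castSucc hmk, Set.image_image]
            simp only [Fin.snoc_castSucc]
            exact h2 m hmk
          · have hm2 : m = k + 1 := le_antisymm hm hm'
            subst hm2
            have huniv : {i : Fin (k+1) | (i:ℕ) < k+1} = Set.univ := by
              ext i; simp [i.isLt, Nat.lt_succ_iff.mp i.isLt]
            rw [huniv, Set.image_univ, range_snoc', Submodule.span_insert, hWsup,
              sup_comm, ← hWk_span]
            congr 1
            rw [hz]
            exact (Submodule.span_singleton_smul_eq (IsUnit.mk0 s hs0) x').symm
        · -- σ fixes O
          intro i hi
          simp only [Finset.mem_union, Finset.mem_image] at hi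
          rcases hi with hi | ⟨j, hj, rfl⟩
          · have : i = Fin.last k := by
              by_cases h : a = 0
              · simpa [h] using hi
              · simp [h] at hi
            subst this; simp
          · simp [h3 j hj]
        · -- open orthogonality
          intro i hi m
          simp only [Finset.mem_union, Finset.mem_image] at hi
          rcases hi with hi | ⟨j, hj, rfl⟩
          · have hia : a = 0 ∧ i = Fin.last k := by
              by_cases h : a = 0
              · simpa [h] using And.intro h hi
              · simp [h] at hi
            obtain ⟨h0, rfl⟩ := hia
            induction m using Fin.lastCases with
            | last => simpa using hzz0 h0
            | cast j => simpa using hzorth j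
          · induction m using Fin.lastCases with
            | last =>
              simp only [Fin.snoc_castSucc, Fin.snoc_last]
              rw [hsymm]; exact hzorth j
            | cast j' => simpa using h4 j hj j'
        · -- block orthogonality
          intro i m
          induction i using Fin.lastCases with
          | last =>
            induction m using Fin.lastCases with
            | last => intro h _; exact absurd rfl h
            | cast j =>
              intro _ _
              simp only [Fin.snoc_castSucc, Fin.snoc_last]
              exact hzorth j
          | cast j =>
            induction m using Fin.lastCases with
            | last =>
              intro _ _
              simp only [Fin.snoc_castSucc, Fin.snoc_last]
              rw [hsymm]; exact hzorth j
            | cast j' =>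
              intro hne hneσ
              simp only [Fin.snoc_castSucc] at *
              refine h5 j j' (fun h => hne (by rw [h])) (fun h => hneσ (by rw [h]))
        · -- singletons closed
          intro i hiO hiσ
          induction i using Fin.lastCases with
          | last =>
            simp only [Fin.snoc_last]
            refine hzsq ?_
            intro h0
            apply hiO
            simp [h0]
          | cast j =>
            have hjO : j ∉ O := by
              intro h
              exact hiO (Finset.mem_union_right _ (Finset.mem_image_of_mem _ h))
            have hjσ : σ j = j := by
              simp only [Fin.snoc_castSucc] at hiσ
              exact Fin.castSucc_injective k hiσ
            simpa using h6 j hjO hjσ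
        · -- pairs
          intro i hiσ
          induction i using Fin.lastCases with
          | last => simp at hiσ
          | cast j =>
            have hjσ : σ j ≠ j := by
              simp only [Fin.snoc_castSucc] at hiσ
              exact fun h => hiσ (by rw [h])
            simp only [Fin.snoc_castSucc]
            exact (h7 j hjσ)
      · -- case 3 : pairing with minimal open index
        push_neg at hO
        obtain ⟨j₀, hj₀O, hj₀⟩ := hO
        classical
        set T : Finset (Fin k) := O.filter (fun j => γ x' (v j) ≠ 0) with hT
        have hTne : T.Nonempty := ⟨j₀, Finset.mem_filter.2 ⟨hj₀O, hj₀⟩⟩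
        set i₀ : Fin k := T.min' hTne with hi₀def
        have hi₀T : i₀ ∈ T := T.min'_mem hTne
        have hi₀O : i₀ ∈ O := (Finset.mem_filter.1 hi₀T).1
        set c : ℝ := γ x' (v i₀) with hc
        have hc0 : c ≠ 0 := (Finset.mem_filter.1 hi₀T).2
        have hσi₀ : ∀ j : Fin k, σ j = i₀ → j = i₀ := by
          intro j h
          rw [← h1 j, h, h3 i₀ hi₀O]
        have hmin : ∀ j : Fin k, (j:ℕ) < (i₀:ℕ) → γ x' (v j) = 0 := by
          intro j hj
          by_cases hjO : j ∈ O
          · by_contra hne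
            have hle := T.min'_le j (Finset.mem_filter.2 ⟨hjO, hne⟩)
            rw [← hi₀def] at hle
            exact absurd hj (not_lt.2 (Fin.le_def.1 hle))
          · exact hx'orth j hjO
        set e : Fin k → ℝ := fun j => if j = i₀ then 0 else γ x' (v j) / c with he
        set u : Fin k → V := fun j => v j - e j • v i₀ with hu
        have hui₀ : u i₀ = v i₀ := by simp [hu, he]
        have hveq : ∀ j : Fin k, γ x' (v j) = 0 → u j = v j := by
          intro j hj
          by_cases h : j = i₀
          · rw [h, hui₀]
          · simp [hu, he, if_neg h, hj]
        have hi₀orth : ∀ j, γ (v i₀) (v j) = 0 := h4 i₀ hi₀O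
        have hγu : ∀ j j' : Fin k, γ (u j) (u j') = γ (v j) (v j') := by
          intro j j'
          have e1 : γ (v j) (v i₀) = 0 := by rw [hsymm]; exact hi₀orth j
          simp [hu, map_sub, map_smul, e1, hi₀orth]
        set y : V := c⁻¹ • x' with hy
        set b : ℝ := γ y y with hb
        set z : V := y - (b/2) • v i₀ with hz
        have hyv : ∀ j, γ y (v j) = c⁻¹ * γ x' (v j) := by
          intro j
          rw [hy]
          simp [map_smul]
        have hzv : ∀ j, γ z (v j) = c⁻¹ * γ x' (v j) := by
          intro j
          rw [hz]
          simp [map_sub, map_smul, hi₀orth j, hyv j]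
        have hzi₀ : γ z (v i₀) = 1 := by rw [hzv, ← hc, inv_mul_cancel₀ hc0]
        have hzz : γ z z = 0 := by
          rw [hz]
          simp only [map_sub, map_smul, LinearMap.sub_apply, LinearMap.smul_apply, smul_eq_mul]
          have e1 : γ y (v i₀) = 1 := by rw [hyv, ← hc, inv_mul_cancel₀ hc0]
          have e2 : γ (v i₀) y = 1 := by rw [hsymm]; exact e1
          have e3 : γ (v i₀) (v i₀) = 0 := hi₀orth i₀
          rw [← hb, e1, e2, e3]
          ring
        have hzu : ∀ j : Fin k, j ≠ i₀ → γ z (u j) = 0 := by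
          intro j hj
          have step : γ z (u j) = γ z (v j) - e j * γ z (v i₀) := by
            simp [hu, map_sub, map_smul]
          rw [step, hzi₀, mul_one, hzv, he]
          simp only [if_neg hj]
          rw [div_eq_inv_mul, sub_self]
        have hzmem : z ∈ W (k+1) := by
          rw [hz, hy]
          exact sub_mem (Submodule.smul_mem _ _ hx'mem)
            (Submodule.smul_mem _ _ (hmono k (k+1) (Nat.le_succ k) hk1 (hvmem i₀)))
        have hWz : W (k+1) = W k ⊔ Submodule.span ℝ {z} := by
          rw [hWsup]
          have hform : z = c⁻¹ • x' + (-((b/2) • v i₀)) := by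
            rw [hz, hy, sub_eq_add_neg]
          rw [show ({z} : Set V) = {c⁻¹ • x' + (-((b/2) • v i₀))} from by rw [← hform]]
          exact (sup_span_aux (W k) x' _ c⁻¹ (inv_ne_zero hc0)
            (neg_mem (Submodule.smul_mem _ _ (hvmem i₀)))).symm
        have huspan : ∀ m ≤ k, Submodule.span ℝ (u '' {i : Fin k | (i:ℕ) < m}) = W m := by
          intro m hmk
          rw [h2 m hmk]
          rcases le_or_gt m (i₀:ℕ) with hmi | hmi
          · congr 1
            apply Set.image_congr
            intro j hj
            exact hveq j (hmin j (lt_of_lt_of_le hj hmi))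
          · have hi₀S : v i₀ ∈ v '' {i : Fin k | (i:ℕ) < m} := ⟨i₀, hmi, rfl⟩
            have hi₀S' : u i₀ ∈ u '' {i : Fin k | (i:ℕ) < m} := ⟨i₀, hmi, rfl⟩
            apply le_antisymm
            · rw [Submodule.span_le]
              rintro w ⟨j, hjS, rfl⟩
              simp only [hu]
              exact sub_mem (Submodule.subset_span ⟨j, hjS, rfl⟩)
                (Submodule.smul_mem _ _ (Submodule.subset_span hi₀S))
            · rw [Submodule.span_le]
              rintro w ⟨j, hjS, rfl⟩
              have hvj : v j = u j + e j • u i₀ := by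
                rw [hui₀]
                simp [hu]
              rw [hvj]
              exact add_mem (Submodule.subset_span ⟨j, hjS, rfl⟩)
                (Submodule.smul_mem _ _ (Submodule.subset_span hi₀S'))
        refine ⟨Fin.snoc u z,
          Fin.snoc (fun j => if j = i₀ then Fin.last k else (σ j).castSucc) (Fin.castSucc i₀),
          (O.erase i₀).image Fin.castSucc, ?_, ?_, ?_, ?_, ?_, ?_, ?_⟩
        · -- involution
          intro i
          induction i using Fin.lastCases with
          | last => simp
          | cast j =>
            by_cases h : j = i₀
            · subst h
              simp
            · have hσj : σ j ≠ i₀ := fun hh => h (hσi₀ j hh)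
              simp [if_neg h, if_neg hσj, h1 j]
        · -- spans
          intro m hm
          rcases Nat.lt_or_ge m (k+1) with hm' | hm'
          · have hmk : m ≤ k := Nat.lt_succ_iff.1 hm'
            rw [set_lt_castSucc hmk, Set.image_image]
            simp only [Fin.snoc_castSucc]
            exact (huspan m hmk).symm
          · have hm2 : m = k + 1 := le_antisymm hm hm'
            subst hm2
            have huniv : {i : Fin (k+1) | (i:ℕ) < k+1} = Set.univ := by
              ext i; simp [i.isLt, Nat.lt_succ_iff.mp i.isLt]
            rw [huniv, Set.image_univ, range_snoc', Submodule.span_insert, hWz,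
              range_eq_setlt u, huspan k le_rfl]
            exact sup_comm _ _
        · -- σ fixes O'
          intro i hi
          simp only [Finset.mem_image, Finset.mem_erase] at hi
          obtain ⟨j, ⟨hji₀, hjO⟩, rfl⟩ := hi
          simp [if_neg hji₀, h3 j hjO]
        · -- open orthogonality
          intro i hi m
          simp only [Finset.mem_image, Finset.mem_erase] at hi
          obtain ⟨j, ⟨hji₀, hjO⟩, rfl⟩ := hi
          induction m using Fin.lastCases with
          | last =>
            simp only [Fin.snoc_castSucc, Fin.snoc_last]
            rw [hsymm]
            exact hzu j hji₀
          | cast j' =>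
            simp only [Fin.snoc_castSucc]
            rw [hγu]
            exact h4 j hjO j'
        · -- block orthogonality
          intro i m
          induction i using Fin.lastCases with
          | last =>
            induction m using Fin.lastCases with
            | last => intro h _; exact absurd rfl h
            | cast j =>
              intro _ hneσ
              simp only [Fin.snoc_castSucc, Fin.snoc_last] at hneσ ⊢
              apply hzu j
              intro hh
              exact hneσ (by rw [hh])
          | cast j =>
            induction m using Fin.lastCases with
            | last =>
              intro _ hneσ
              simp only [Fin.snoc_castSucc, Fin.snoc_last] at hneσ ⊢
              have hji₀ : j ≠ i₀ := by
                intro hh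
                subst hh
                simp at hneσ
              rw [hsymm]
              exact hzu j hji₀
            | cast j' =>
              intro hne hneσ
              simp only [Fin.snoc_castSucc] at hneσ ⊢
              rw [hγu]
              by_cases h : j = i₀
              · subst h
                exact hi₀orth j'
              · rw [if_neg h] at hneσ
                refine h5 j j' (fun hh => hne (by rw [hh])) (fun hh => hneσ (by rw [hh]))
        · -- singletons closed
          intro i hiO hiσ
          induction i using Fin.lastCases with
          | last =>
            exfalso
            rw [Fin.snoc_last] at hiσ
            exact (Fin.castSucc_lt_last i₀).ne hiσ
          | cast j =>
            rw [Fin.snoc_castSucc] at hiσ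
            have hji₀ : j ≠ i₀ := by
              intro hh
              subst hh
              rw [if_pos rfl] at hiσ
              exact (Fin.castSucc_lt_last _).ne' hiσ
            rw [if_neg hji₀] at hiσ
            have hσj : σ j = j := Fin.castSucc_injective k hiσ
            have hjO : j ∉ O := by
              intro h
              exact hiO (Finset.mem_image_of_mem _ (Finset.mem_erase.2 ⟨hji₀, h⟩))
            simp only [Fin.snoc_castSucc]
            rw [hγu]
            exact h6 j hjO hσj
        · -- pairs
          intro i hiσ
          induction i using Fin.lastCases with
          | last =>
            simp only [Fin.snoc_last, Fin.snoc_castSucc]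
            exact ⟨hzz, by rw [hui₀]; exact hzi₀⟩
          | cast j =>
            by_cases h : j = i₀
            · subst h
              constructor
              · simp only [Fin.snoc_castSucc]
                rw [hγu]
                exact hi₀orth i₀
              · have hgoal : (γ (u i₀)) z = 1 := by
                  rw [hui₀, hsymm]
                  exact hzi₀
                simpa using hgoal
            · simp only [Fin.snoc_castSucc, if_neg h] at hiσ ⊢
              have hσj : σ j ≠ j := fun hh => hiσ (by rw [hh])
              refine ⟨by rw [hγu]; exact (h7 j hσj).1, ?_⟩
              rw [hγu]
              exact (h7 j hσj).2
  -- conclude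
  obtain ⟨v, σ, O, h1, h2, h3, h4, h5, h6, h7⟩ := key n le_rfl
  have hspan : ⊤ ≤ Submodule.span ℝ (Set.range v) := by
    rw [range_eq_setlt, ← h2 n le_rfl, hWn]
  have hcard : Fintype.card (Fin n) = finrank ℝ V := by simp [hdimV]
  let B := basisOfTopLeSpanOfCardEqFinrank v hspan hcard
  have hB : ⇑B = v := coe_basisOfTopLeSpanOfCardEqFinrank v hspan hcard
  have hOempty : O = ∅ := by
    by_contra h
    obtain ⟨i, hi⟩ := Finset.nonempty_iff_ne_empty.2 h
    have : v i = 0 := by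
      apply hnd
      intro y
      have hzero : (γ (v i)) = (0 : V →ₗ[ℝ] ℝ) := by
        apply LinearMap.ext_on (le_antisymm le_top hspan)
        rintro x ⟨j, rfl⟩
        exact h4 i hi j
      rw [hzero]; rfl
    exact B.ne_zero i (by rw [hB]; exact this)
  subst hOempty
  refine ⟨B, σ, h1, ?_, ?_, ?_, ?_⟩ <;> rw [hB]
  · exact h2
  · exact h5
  · exact fun i hi => h6 i (Finset.notMem_empty i) hi
  · exact h7
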